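/- Let H_0 ∈ (1/2,1) and 0 ≤ ρ < H_0. Then there exists a constant C > 0, depending only on H_0 and ρ, such that for all s_2 > 0 and r_2 > 0: ∫_0^{s_2} ∫_0^{r_2} (s_2 − s_1)^{−ρ} (r_2 − r_1)^{−ρ} |s_1 − r_1|^{2H_0−2} dr_1 ds_1 ≤ C · s_2^{H_0−ρ} · r_2^{H_0−ρ}. -/

import Mathlib

open MeasureTheory Real ENNReal Set

lemma integ_on (c a b : ℝ) (hc : -1 < c) (hab : a ≤ b) :
    IntegrableOn (fun x => (x - a) ^ c) (Ioo a b) := by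
  have h := (intervalIntegral.intervalIntegrable_rpow' hc (a := 0) (b := b - a)).comp_sub_right a
  simp only [zero_add, sub_add_cancel] at h
  rw [intervalIntegrable_iff_integrableOn_Ioc_of_le hab] at h
  exact h.mono_set Ioo_subset_Ioc_self

lemma lint_sub_left (c a b : ℝ) (hc : -1 < c) (hab : a < b) :
    ∫⁻ x in Ioo a b, ENNReal.ofReal ((x - a) ^ c) =
      ENNReal.ofReal ((b - a) ^ (c + 1) / (c + 1)) := by
  rw [← ofReal_integral_eq_lintegral_ofReal (integ_on c a b hc hab.le)]
  · congr 1
    rw [← integral_Ioc_eq_integral_Ioo, ← intervalIntegral.integral_of_le hab.le]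
    rw [intervalIntegral.integral_comp_sub_right (fun x => x ^ c) a]
    simp only [sub_self]
    rw [integral_rpow (Or.inl hc)]
    rw [Real.zero_rpow (by linarith)]
    ring
  · filter_upwards [ae_restrict_mem measurableSet_Ioo] with x hx
    exact Real.rpow_nonneg (by linarith [hx.1]) c

lemma lint_sub_right (c a b : ℝ) (hc : -1 < c) (hab : a < b) :
    ∫⁻ x in Ioo a b, ENNReal.ofReal ((b - x) ^ c) =
      ENNReal.ofReal ((b - a) ^ (c + 1) / (c + 1)) := by
  have h : IntegrableOn (fun x => (b - x) ^ c) (Ioo a b) := by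
    have h := ((intervalIntegral.intervalIntegrable_rpow' hc (a := 0) (b := b - a)).comp_sub_left b).symm
    simp only [sub_zero, sub_sub_cancel] at h
    rw [show b - (b - a) = a by ring] at h
    rw [intervalIntegrable_iff_integrableOn_Ioc_of_le hab.le] at h
    exact h.mono_set Ioo_subset_Ioc_self
  rw [← ofReal_integral_eq_lintegral_ofReal h]
  · congr 1
    rw [← integral_Ioc_eq_integral_Ioo, ← intervalIntegral.integral_of_le hab.le]
    rw [intervalIntegral.integral_comp_sub_left (fun x => x ^ c) b]
    simp only [sub_self]
    rw [integral_rpow (Or.inl hc)]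
    rw [Real.zero_rpow (by linarith)]
    ring
  · filter_upwards [ae_restrict_mem measurableSet_Ioo] with x hx
    exact Real.rpow_nonneg (by linarith [hx.2]) c

lemma beta_bound (ρ α : ℝ) (hρ0 : 0 ≤ ρ) (hρ1 : ρ < 1) (hα0 : -1 < α) (hα1 : α < 0)
    (s r : ℝ) (hsr : s < r) :
    ∫⁻ u in Ioo s r, ENNReal.ofReal ((r - u) ^ (-ρ) * (u - s) ^ α)
      ≤ ENNReal.ofReal ((2 ^ ρ / (α + 1) + 2 ^ (-α) / (1 - ρ)) * (r - s) ^ (α + 1 - ρ)) := by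
  have hd0 : 0 < r - s := by linarith
  have key : ∀ u ∈ Ioo s r, ENNReal.ofReal ((r - u) ^ (-ρ) * (u - s) ^ α) ≤
      ENNReal.ofReal (((r - s)/2) ^ (-ρ) * (u - s) ^ α) +
      ENNReal.ofReal (((r - s)/2) ^ α * (r - u) ^ (-ρ)) := by
    intro u hu
    obtain ⟨hu1, hu2⟩ := hu
    rw [← ENNReal.ofReal_add
      (mul_nonneg (Real.rpow_nonneg (by linarith) _) (Real.rpow_nonneg (by linarith) _))
      (mul_nonneg (Real.rpow_nonneg (by linarith) _) (Real.rpow_nonneg (by linarith) _))]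
    apply ENNReal.ofReal_le_ofReal
    rcases le_total u ((s + r)/2) with hm | hm
    · have h1 : (r - u) ^ (-ρ) ≤ ((r - s)/2) ^ (-ρ) :=
        Real.rpow_le_rpow_of_nonpos (by linarith) (by linarith) (by linarith)
      have h2 := mul_le_mul_of_nonneg_right h1 (Real.rpow_nonneg (by linarith : (0:ℝ) ≤ u - s) α)
      exact h2.trans (le_add_of_nonneg_right
        (mul_nonneg (Real.rpow_nonneg (by linarith) _) (Real.rpow_nonneg (by linarith) _)))
    · have h1 : (u - s) ^ α ≤ ((r - s)/2) ^ α :=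
        Real.rpow_le_rpow_of_nonpos (by linarith) (by linarith) (by linarith)
      have h2 := mul_le_mul_of_nonneg_left h1
        (Real.rpow_nonneg (by linarith : (0:ℝ) ≤ r - u) (-ρ))
      calc (r - u) ^ (-ρ) * (u - s) ^ α ≤ (r - u) ^ (-ρ) * ((r-s)/2) ^ α := h2
        _ = ((r-s)/2) ^ α * (r - u) ^ (-ρ) := by ring
        _ ≤ _ := le_add_of_nonneg_left
          (mul_nonneg (Real.rpow_nonneg (by linarith) _) (Real.rpow_nonneg (by linarith) _))
  calc ∫⁻ u in Ioo s r, ENNReal.ofReal ((r - u) ^ (-ρ) * (u - s) ^ α)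
      ≤ ∫⁻ u in Ioo s r, (ENNReal.ofReal (((r-s)/2) ^ (-ρ)) * ENNReal.ofReal ((u - s) ^ α) +
          ENNReal.ofReal (((r-s)/2) ^ α) * ENNReal.ofReal ((r - u) ^ (-ρ))) := by
        apply setLIntegral_mono' measurableSet_Ioo
        intro u hu
        refine (key u hu).trans (le_of_eq ?_)
        rw [← ENNReal.ofReal_mul (Real.rpow_nonneg (by linarith) _),
          ← ENNReal.ofReal_mul (Real.rpow_nonneg (by linarith) _)]
    _ = (ENNReal.ofReal (((r-s)/2) ^ (-ρ)) * ∫⁻ u in Ioo s r, ENNReal.ofReal ((u - s) ^ α)) +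
        (ENNReal.ofReal (((r-s)/2) ^ α) * ∫⁻ u in Ioo s r, ENNReal.ofReal ((r - u) ^ (-ρ))) := by
        rw [lintegral_add_left']
        · rw [lintegral_const_mul' _ _ ENNReal.ofReal_ne_top,
            lintegral_const_mul' _ _ ENNReal.ofReal_ne_top]
        · exact (ENNReal.measurable_ofReal.comp (by fun_prop)).aemeasurable.const_mul _
    _ ≤ ENNReal.ofReal ((2 ^ ρ / (α + 1) + 2 ^ (-α) / (1 - ρ)) * (r - s) ^ (α + 1 - ρ)) := by
        rw [lint_sub_left α s r hα0 hsr, lint_sub_right (-ρ) s r (by linarith) hsr,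
          ← ENNReal.ofReal_mul (Real.rpow_nonneg (by positivity) _),
          ← ENNReal.ofReal_mul (Real.rpow_nonneg (by positivity) _),
          ← ENNReal.ofReal_add
            (mul_nonneg (Real.rpow_nonneg (by positivity) _)
              (div_nonneg (Real.rpow_nonneg hd0.le _) (by linarith)))
            (mul_nonneg (Real.rpow_nonneg (by positivity) _)
              (div_nonneg (Real.rpow_nonneg hd0.le _) (by linarith)))]
        apply ENNReal.ofReal_le_ofReal
        apply le_of_eq
        have e2 : ∀ c : ℝ, ((r-s)/2) ^ c = (r-s) ^ c / 2 ^ c := fun c =>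
          Real.div_rpow hd0.le (by norm_num : (0:ℝ) ≤ 2) c
        have eda : (r-s) ^ (α + 1 - ρ) = (r-s) ^ (-ρ) * (r-s) ^ (α + 1) := by
          rw [← Real.rpow_add hd0]; ring_nf
        have ed3 : (r-s) ^ α * (r-s) ^ (-ρ + 1) = (r-s) ^ (-ρ) * (r-s) ^ (α + 1) := by
          rw [← Real.rpow_add hd0, ← Real.rpow_add hd0]; ring_nf
        have h2ρ : (2:ℝ) ^ (-ρ) = (2 ^ ρ)⁻¹ := by
          rw [Real.rpow_neg (by norm_num)]
        have h2α : (2:ℝ) ^ α = (2 ^ (-α))⁻¹ := by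
          rw [← Real.rpow_neg (by norm_num), neg_neg]
        rw [e2, e2, eda, h2ρ, h2α]
        rw [show -ρ + 1 = 1 - ρ by ring] at ed3 ⊢
        simp only [div_eq_mul_inv, inv_inv]
        linear_combination (2 ^ (-α) * (1 - ρ)⁻¹) * ed3

lemma kcore (H0 ρ t r : ℝ) (hH1 : 1/2 < H0) (hH2 : H0 < 1) (hρ0 : 0 ≤ ρ) (hρ : ρ < H0)
    (ht : 0 < t) (hr : 0 < r) :
    ∫⁻ x in Ioo 0 (min t r), ENNReal.ofReal ((t - x) ^ (-ρ) * (r - x) ^ (2*H0 - 1 - ρ))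
      ≤ ENNReal.ofReal ((1/(2*H0 - 2*ρ) + 1/(1 - ρ)) * (t ^ (H0 - ρ) * r ^ (H0 - ρ))) := by
  have hm0 : 0 < min t r := lt_min ht hr
  have hmt : min t r ≤ t := min_le_left t r
  have hmr : min t r ≤ r := min_le_right t r
  have hη : 0 < H0 - ρ := by linarith
  have hc1a : (0:ℝ) < 2*H0 - 2*ρ := by linarith
  have hc1b : (0:ℝ) < 1 - ρ := by linarith
  have htη : 0 ≤ t ^ (H0 - ρ) := Real.rpow_nonneg ht.le _
  have hrη : 0 ≤ r ^ (H0 - ρ) := Real.rpow_nonneg hr.le _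
  have hmη : min t r ^ (H0 - ρ) ≤ t ^ (H0 - ρ) := Real.rpow_le_rpow hm0.le hmt hη.le
  have hmη' : min t r ^ (H0 - ρ) ≤ r ^ (H0 - ρ) := Real.rpow_le_rpow hm0.le hmr hη.le
  have hprod : min t r ^ (H0 - ρ) * min t r ^ (H0 - ρ) ≤ t ^ (H0 - ρ) * r ^ (H0 - ρ) :=
    mul_le_mul hmη hmη' (Real.rpow_nonneg hm0.le _) htη
  rcases le_or_gt (2*H0 - 1 - ρ) 0 with hβ | hβ
  · calc ∫⁻ x in Ioo 0 (min t r), ENNReal.ofReal ((t - x) ^ (-ρ) * (r - x) ^ (2*H0 - 1 - ρ))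
        ≤ ∫⁻ x in Ioo 0 (min t r), ENNReal.ofReal ((min t r - x) ^ (2*H0 - 1 - 2*ρ)) := by
          apply setLIntegral_mono' measurableSet_Ioo
          intro x hx
          apply ENNReal.ofReal_le_ofReal
          have hx1 : 0 < min t r - x := by linarith [hx.2]
          have h1 : (t - x) ^ (-ρ) ≤ (min t r - x) ^ (-ρ) :=
            Real.rpow_le_rpow_of_nonpos hx1 (by linarith) (by linarith)
          have h2 : (r - x) ^ (2*H0 - 1 - ρ) ≤ (min t r - x) ^ (2*H0 - 1 - ρ) :=
            Real.rpow_le_rpow_of_nonpos hx1 (by linarith) hβ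
          calc (t - x) ^ (-ρ) * (r - x) ^ (2*H0 - 1 - ρ)
              ≤ (min t r - x) ^ (-ρ) * (min t r - x) ^ (2*H0 - 1 - ρ) :=
                mul_le_mul h1 h2 (Real.rpow_nonneg (by linarith [hx.1, hmr]) _)
                  (Real.rpow_nonneg hx1.le _)
            _ = (min t r - x) ^ (2*H0 - 1 - 2*ρ) := by
                rw [← Real.rpow_add hx1]; ring_nf
      _ = ENNReal.ofReal ((min t r) ^ (2*H0 - 1 - 2*ρ + 1) / (2*H0 - 1 - 2*ρ + 1)) := by
          rw [lint_sub_right (2*H0 - 1 - 2*ρ) 0 (min t r) (by linarith) hm0, sub_zero]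
      _ ≤ ENNReal.ofReal ((1/(2*H0 - 2*ρ) + 1/(1 - ρ)) * (t ^ (H0 - ρ) * r ^ (H0 - ρ))) := by
          apply ENNReal.ofReal_le_ofReal
          have e : min t r ^ (2*H0 - 1 - 2*ρ + 1) = min t r ^ (H0 - ρ) * min t r ^ (H0 - ρ) := by
            rw [← Real.rpow_add hm0]; ring_nf
          rw [show 2*H0 - 1 - 2*ρ + 1 = 2*H0 - 2*ρ by ring] at e ⊢
          rw [e]
          calc min t r ^ (H0 - ρ) * min t r ^ (H0 - ρ) / (2*H0 - 2*ρ)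
              = (1/(2*H0 - 2*ρ)) * (min t r ^ (H0 - ρ) * min t r ^ (H0 - ρ)) := by ring
            _ ≤ (1/(2*H0 - 2*ρ)) * (t ^ (H0 - ρ) * r ^ (H0 - ρ)) :=
                mul_le_mul_of_nonneg_left hprod (by positivity)
            _ ≤ _ := mul_le_mul_of_nonneg_right
                (le_add_of_nonneg_right (by positivity)) (by positivity)
  · calc ∫⁻ x in Ioo 0 (min t r), ENNReal.ofReal ((t - x) ^ (-ρ) * (r - x) ^ (2*H0 - 1 - ρ))
        ≤ ∫⁻ x in Ioo 0 (min t r),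
            ENNReal.ofReal (r ^ (2*H0 - 1 - ρ)) * ENNReal.ofReal ((min t r - x) ^ (-ρ)) := by
          apply setLIntegral_mono' measurableSet_Ioo
          intro x hx
          rw [← ENNReal.ofReal_mul (Real.rpow_nonneg hr.le _)]
          apply ENNReal.ofReal_le_ofReal
          have hx1 : 0 < min t r - x := by linarith [hx.2]
          have h1 : (t - x) ^ (-ρ) ≤ (min t r - x) ^ (-ρ) :=
            Real.rpow_le_rpow_of_nonpos hx1 (by linarith) (by linarith)
          have h2 : (r - x) ^ (2*H0 - 1 - ρ) ≤ r ^ (2*H0 - 1 - ρ) :=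
            Real.rpow_le_rpow (by linarith [hx.1, hmr]) (by linarith [hx.1]) hβ.le
          calc (t - x) ^ (-ρ) * (r - x) ^ (2*H0 - 1 - ρ)
              ≤ (min t r - x) ^ (-ρ) * r ^ (2*H0 - 1 - ρ) :=
                mul_le_mul h1 h2 (Real.rpow_nonneg (by linarith [hx.1, hmr]) _)
                  (Real.rpow_nonneg hx1.le _)
            _ = r ^ (2*H0 - 1 - ρ) * (min t r - x) ^ (-ρ) := by ring
      _ = ENNReal.ofReal (r ^ (2*H0 - 1 - ρ)) * ENNReal.ofReal ((min t r) ^ (-ρ + 1) / (-ρ + 1)) := by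
          rw [lintegral_const_mul' _ _ ENNReal.ofReal_ne_top,
            lint_sub_right (-ρ) 0 (min t r) (by linarith) hm0, sub_zero]
      _ ≤ ENNReal.ofReal ((1/(2*H0 - 2*ρ) + 1/(1 - ρ)) * (t ^ (H0 - ρ) * r ^ (H0 - ρ))) := by
          rw [← ENNReal.ofReal_mul (Real.rpow_nonneg hr.le _)]
          apply ENNReal.ofReal_le_ofReal
          rw [show -ρ + 1 = 1 - ρ by ring]
          have key : r ^ (2*H0 - 1 - ρ) * min t r ^ (1 - ρ) ≤ t ^ (H0 - ρ) * r ^ (H0 - ρ) := by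
            rcases le_total t r with htr | hrt
            · rw [min_eq_left htr]
              have e1 : t ^ (1 - ρ) = t ^ (H0 - ρ) * t ^ (1 - H0) := by
                rw [← Real.rpow_add ht]; ring_nf
              have e2 : t ^ (1 - H0) ≤ r ^ (1 - H0) :=
                Real.rpow_le_rpow ht.le htr (by linarith)
              have e3 : r ^ (2*H0 - 1 - ρ) * r ^ (1 - H0) = r ^ (H0 - ρ) := by
                rw [← Real.rpow_add hr]; ring_nf
              calc r ^ (2*H0 - 1 - ρ) * t ^ (1 - ρ)
                  = t ^ (H0 - ρ) * (r ^ (2*H0 - 1 - ρ) * t ^ (1 - H0)) := by rw [e1]; ring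
                _ ≤ t ^ (H0 - ρ) * (r ^ (2*H0 - 1 - ρ) * r ^ (1 - H0)) := by
                    apply mul_le_mul_of_nonneg_left _ htη
                    exact mul_le_mul_of_nonneg_left e2 (Real.rpow_nonneg hr.le _)
                _ = t ^ (H0 - ρ) * r ^ (H0 - ρ) := by rw [e3]
            · rw [min_eq_right hrt]
              have e3 : r ^ (2*H0 - 1 - ρ) * r ^ (1 - ρ) = r ^ (H0 - ρ) * r ^ (H0 - ρ) := by
                rw [← Real.rpow_add hr, ← Real.rpow_add hr]; ring_nf
              rw [e3]
              exact mul_le_mul_of_nonneg_right (Real.rpow_le_rpow hr.le hrt hη.le)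
                (Real.rpow_nonneg hr.le _)
          calc r ^ (2*H0 - 1 - ρ) * (min t r ^ (1 - ρ) / (1 - ρ))
              = (1/(1 - ρ)) * (r ^ (2*H0 - 1 - ρ) * min t r ^ (1 - ρ)) := by ring
            _ ≤ (1/(1 - ρ)) * (t ^ (H0 - ρ) * r ^ (H0 - ρ)) :=
                mul_le_mul_of_nonneg_left key (by positivity)
            _ ≤ _ := mul_le_mul_of_nonneg_right
                (le_add_of_nonneg_left (by positivity)) (by positivity)

/-- For `H₀ ∈ (1/2,1)` and `0 ≤ ρ < H₀` there is a constant `C > 0`,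
depending only on `H₀` and `ρ`, such that for all `s₂, r₂ > 0`:
`∫_0^{s₂} ∫_0^{r₂} (s₂ − s₁)^{−ρ} (r₂ − r₁)^{−ρ} |s₁ − r₁|^{2H₀−2} dr₁ ds₁
  ≤ C s₂^{H₀−ρ} r₂^{H₀−ρ}`. -/
theorem hls_double_integral_bound (H0 ρ : ℝ) (hH0 : H0 ∈ Set.Ioo (1/2 : ℝ) 1)
    (hρ0 : 0 ≤ ρ) (hρ : ρ < H0) :
    ∃ C : ℝ, 0 < C ∧ ∀ s2 r2 : ℝ, 0 < s2 → 0 < r2 →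
      (∫⁻ s1 in Set.Ioo (0 : ℝ) s2, ∫⁻ r1 in Set.Ioo (0 : ℝ) r2,
        ENNReal.ofReal ((s2 - s1) ^ (-ρ) * (r2 - r1) ^ (-ρ) *
          |s1 - r1| ^ (2 * H0 - 2))) ≤
        ENNReal.ofReal (C * s2 ^ (H0 - ρ) * r2 ^ (H0 - ρ)) := by
  obtain ⟨hH1, hH2⟩ := hH0
  have hρ1 : ρ < 1 := lt_trans hρ hH2
  have hα0 : (-1:ℝ) < 2 * H0 - 2 := by linarith
  have hα1 : 2 * H0 - 2 < 0 := by linarith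
  have hc0pos : (0:ℝ) < 2 ^ ρ / (2 * H0 - 2 + 1) + 2 ^ (-(2 * H0 - 2)) / (1 - ρ) :=
    add_pos (div_pos (Real.rpow_pos_of_pos two_pos ρ) (by linarith))
      (div_pos (Real.rpow_pos_of_pos two_pos _) (by linarith))
  have hc1pos : (0:ℝ) < 1 / (2 * H0 - 2 * ρ) + 1 / (1 - ρ) :=
    add_pos (one_div_pos.mpr (by linarith)) (one_div_pos.mpr (by linarith))
  refine ⟨2 * (2 ^ ρ / (2 * H0 - 2 + 1) + 2 ^ (-(2 * H0 - 2)) / (1 - ρ)) *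
    (1 / (2 * H0 - 2 * ρ) + 1 / (1 - ρ)), by positivity, ?_⟩
  intro t r ht hr
  have hmt : min t r ≤ t := min_le_left t r
  have hmr : min t r ≤ r := min_le_right t r
  have hm0 : 0 < min t r := lt_min ht hr
  set gfun : ℝ × ℝ → ℝ≥0∞ := fun p =>
    ENNReal.ofReal ((t - p.1) ^ (-ρ) * (r - p.2) ^ (-ρ) * |p.1 - p.2| ^ (2 * H0 - 2))
    with hgdef
  have hgm : Measurable gfun := by rw [hgdef]; fun_prop
  set S : Set (ℝ × ℝ) := {p : ℝ × ℝ | 0 < p.2 ∧ p.2 < min p.1 r} with hSdef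
  have hSm : MeasurableSet S :=
    MeasurableSet.inter (measurableSet_lt measurable_const measurable_snd)
      (measurableSet_lt measurable_snd (measurable_fst.min measurable_const))
  have hTm : MeasurableSet {p : ℝ × ℝ | p.1 ∈ Ioo (0:ℝ) t} :=
    measurable_fst measurableSet_Ioo
  set G : ℝ × ℝ → ℝ≥0∞ := ({p : ℝ × ℝ | p.1 ∈ Ioo (0:ℝ) t} ∩ S).indicator gfun with hGdef
  have hGm : Measurable G := hgm.indicator (hTm.inter hSm)
  have hA : ∀ s : ℝ, (∫⁻ u in Ioo 0 (min s r), gfun (s, u)) =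
      ∫⁻ u, S.indicator gfun (s, u) := by
    intro s
    rw [← lintegral_indicator measurableSet_Ioo]
    rfl
  have hAmeas : Measurable fun s => ∫⁻ u, S.indicator gfun (s, u) :=
    (hgm.indicator hSm).lintegral_prod_right'
  calc ∫⁻ s1 in Ioo (0 : ℝ) t, ∫⁻ r1 in Ioo (0 : ℝ) r,
        ENNReal.ofReal ((t - s1) ^ (-ρ) * (r - r1) ^ (-ρ) * |s1 - r1| ^ (2 * H0 - 2))
      = ∫⁻ s in Ioo (0:ℝ) t, ((∫⁻ u, S.indicator gfun (s, u)) +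
          ∫⁻ u in Ico (min s r) r, gfun (s, u)) := by
        apply setLIntegral_congr_fun measurableSet_Ioo
        intro s hs
        dsimp only
        rw [← hA s]
        have hsplit : Ioo (0:ℝ) r = Ioo 0 (min s r) ∪ Ico (min s r) r :=
          (Set.Ioo_union_Ico_eq_Ioo (lt_min hs.1 hr) (min_le_right s r)).symm
        have hdisj : Disjoint (Ioo (0:ℝ) (min s r)) (Ico (min s r) r) :=
          Set.disjoint_left.mpr fun x hx hx' => absurd (hx.2.trans_le hx'.1) (lt_irrefl x)
        rw [hsplit, lintegral_union measurableSet_Ico hdisj]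
    _ = (∫⁻ s in Ioo (0:ℝ) t, ∫⁻ u, S.indicator gfun (s, u)) +
        ∫⁻ s in Ioo (0:ℝ) t, ∫⁻ u in Ico (min s r) r, gfun (s, u) :=
        lintegral_add_left hAmeas _
    _ ≤ ENNReal.ofReal ((2 ^ ρ / (2 * H0 - 2 + 1) + 2 ^ (-(2 * H0 - 2)) / (1 - ρ)) *
          ((1 / (2 * H0 - 2 * ρ) + 1 / (1 - ρ)) * (r ^ (H0 - ρ) * t ^ (H0 - ρ)))) +
        ENNReal.ofReal ((2 ^ ρ / (2 * H0 - 2 + 1) + 2 ^ (-(2 * H0 - 2)) / (1 - ρ)) *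
          ((1 / (2 * H0 - 2 * ρ) + 1 / (1 - ρ)) * (t ^ (H0 - ρ) * r ^ (H0 - ρ)))) := by
        refine add_le_add ?partA ?partB
        case partA =>
          calc ∫⁻ s in Ioo (0:ℝ) t, ∫⁻ u, S.indicator gfun (s, u)
              = ∫⁻ s, ∫⁻ u, G (s, u) := by
                rw [← lintegral_indicator measurableSet_Ioo]
                congr 1; funext s
                by_cases hs : s ∈ Ioo (0:ℝ) t
                · rw [Set.indicator_of_mem hs]
                  congr 1; funext u
                  by_cases hsS : (s, u) ∈ S
                  · rw [Set.indicator_of_mem hsS]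
                    exact (Set.indicator_of_mem
                      (Set.mem_inter (by exact hs) hsS) gfun).symm
                  · rw [Set.indicator_of_notMem hsS]
                    exact (Set.indicator_of_notMem (fun h => hsS h.2) gfun).symm
                · rw [Set.indicator_of_notMem hs]
                  have hz : ∀ u, G (s, u) = 0 := fun u =>
                    Set.indicator_of_notMem (fun h => hs h.1) _
                  simp only [hz, lintegral_zero]
            _ = ∫⁻ u, ∫⁻ s, G (s, u) := lintegral_lintegral_swap hGm.aemeasurable
            _ ≤ ∫⁻ u, (Ioo 0 (min t r)).indicator (fun u => ENNReal.ofReal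
                  ((2 ^ ρ / (2 * H0 - 2 + 1) + 2 ^ (-(2 * H0 - 2)) / (1 - ρ)) *
                    ((r - u) ^ (-ρ) * (t - u) ^ (2 * H0 - 1 - ρ)))) u := by
                apply lintegral_mono
                intro u
                dsimp only
                by_cases hu : u ∈ Ioo (0:ℝ) (min t r)
                · rw [Set.indicator_of_mem hu]
                  have hut : u < t := lt_of_lt_of_le hu.2 hmt
                  have hur : u < r := lt_of_lt_of_le hu.2 hmr
                  have hstep : (fun s => G (s, u)) =
                      (Ioo u t).indicator (fun s => gfun (s, u)) := by
                    funext s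
                    by_cases hsu : s ∈ Ioo u t
                    · rw [Set.indicator_of_mem hsu]
                      refine Set.indicator_of_mem ?_ gfun
                      exact ⟨⟨lt_trans hu.1 hsu.1, hsu.2⟩, hu.1, lt_min hsu.1 hur⟩
                    · rw [Set.indicator_of_notMem hsu]
                      refine Set.indicator_of_notMem ?_ gfun
                      rintro ⟨⟨hs0, hst⟩, hu0, hum⟩
                      exact hsu ⟨(lt_min_iff.mp hum).1, hst⟩
                  rw [hstep, lintegral_indicator measurableSet_Ioo]
                  calc ∫⁻ s in Ioo u t, gfun (s, u)
                      = ENNReal.ofReal ((r - u) ^ (-ρ)) *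
                          ∫⁻ s in Ioo u t, ENNReal.ofReal ((t - s) ^ (-ρ) *
                            (s - u) ^ (2 * H0 - 2)) := by
                        rw [← lintegral_const_mul' _ _ ENNReal.ofReal_ne_top]
                        apply setLIntegral_congr_fun measurableSet_Ioo
                        intro s hs
                        rw [hgdef]
                        simp only
                        rw [← ENNReal.ofReal_mul
                          (Real.rpow_nonneg (by linarith : (0:ℝ) ≤ r - u) _)]
                        congr 1
                        rw [abs_of_pos (by linarith [hs.1] : (0:ℝ) < s - u)]
                        ring
                    _ ≤ ENNReal.ofReal ((r - u) ^ (-ρ)) *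
                          ENNReal.ofReal ((2 ^ ρ / (2 * H0 - 2 + 1) +
                            2 ^ (-(2 * H0 - 2)) / (1 - ρ)) * (t - u) ^ (2 * H0 - 2 + 1 - ρ)) :=
                        mul_le_mul_right
                          (beta_bound ρ (2 * H0 - 2) hρ0 hρ1 hα0 hα1 u t hut) _
                    _ = ENNReal.ofReal ((2 ^ ρ / (2 * H0 - 2 + 1) +
                          2 ^ (-(2 * H0 - 2)) / (1 - ρ)) *
                          ((r - u) ^ (-ρ) * (t - u) ^ (2 * H0 - 1 - ρ))) := by
                        rw [show 2 * H0 - 2 + 1 - ρ = 2 * H0 - 1 - ρ by ring,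
                          ← ENNReal.ofReal_mul
                            (Real.rpow_nonneg (by linarith : (0:ℝ) ≤ r - u) _)]
                        congr 1
                        ring
                · rw [Set.indicator_of_notMem hu]
                  have hz : ∀ s, G (s, u) = 0 := by
                    intro s
                    apply Set.indicator_of_notMem
                    rintro ⟨⟨hs0, hst⟩, hu0, hum⟩
                    exact hu ⟨hu0, lt_min (lt_trans (lt_min_iff.mp hum).1 hst)
                      (lt_min_iff.mp hum).2⟩
                  simp only [hz, lintegral_zero, le_refl]
            _ = ∫⁻ u in Ioo 0 (min t r), ENNReal.ofReal
                  ((2 ^ ρ / (2 * H0 - 2 + 1) + 2 ^ (-(2 * H0 - 2)) / (1 - ρ)) *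
                    ((r - u) ^ (-ρ) * (t - u) ^ (2 * H0 - 1 - ρ))) :=
                lintegral_indicator measurableSet_Ioo _
            _ ≤ ENNReal.ofReal ((2 ^ ρ / (2 * H0 - 2 + 1) + 2 ^ (-(2 * H0 - 2)) / (1 - ρ)) *
                  ((1 / (2 * H0 - 2 * ρ) + 1 / (1 - ρ)) * (r ^ (H0 - ρ) * t ^ (H0 - ρ)))) := by
                simp only [ENNReal.ofReal_mul hc0pos.le]
                rw [lintegral_const_mul' _ _ ENNReal.ofReal_ne_top]
                apply mul_le_mul_right
                have hk := kcore H0 ρ r t hH1 hH2 hρ0 hρ hr ht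
                rwa [min_comm r t] at hk
        case partB =>
          calc ∫⁻ s in Ioo (0:ℝ) t, ∫⁻ u in Ico (min s r) r, gfun (s, u)
              ≤ ∫⁻ s in Ioo (0:ℝ) t, (Ioo 0 (min t r)).indicator (fun s => ENNReal.ofReal
                  ((2 ^ ρ / (2 * H0 - 2 + 1) + 2 ^ (-(2 * H0 - 2)) / (1 - ρ)) *
                    ((t - s) ^ (-ρ) * (r - s) ^ (2 * H0 - 1 - ρ)))) s := by
                apply setLIntegral_mono' measurableSet_Ioo
                intro s hs
                rcases lt_or_ge s r with hsr | hrs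
                · have hmem : s ∈ Ioo (0:ℝ) (min t r) := Set.mem_Ioo.mpr ⟨hs.1, lt_min hs.2 hsr⟩
                  rw [Set.indicator_of_mem hmem, min_eq_left hsr.le]
                  rw [← Measure.restrict_congr_set Ioo_ae_eq_Ico]
                  calc ∫⁻ u in Ioo s r, gfun (s, u)
                      = ENNReal.ofReal ((t - s) ^ (-ρ)) *
                          ∫⁻ u in Ioo s r, ENNReal.ofReal ((r - u) ^ (-ρ) *
                            (u - s) ^ (2 * H0 - 2)) := by
                        rw [← lintegral_const_mul' _ _ ENNReal.ofReal_ne_top]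
                        apply setLIntegral_congr_fun measurableSet_Ioo
                        intro u hu
                        rw [hgdef]
                        simp only
                        rw [← ENNReal.ofReal_mul
                          (Real.rpow_nonneg (by linarith [hs.2] : (0:ℝ) ≤ t - s) _)]
                        congr 1
                        rw [abs_sub_comm, abs_of_pos (by linarith [hu.1] : (0:ℝ) < u - s)]
                        ring
                    _ ≤ ENNReal.ofReal ((t - s) ^ (-ρ)) *
                          ENNReal.ofReal ((2 ^ ρ / (2 * H0 - 2 + 1) +
                            2 ^ (-(2 * H0 - 2)) / (1 - ρ)) * (r - s) ^ (2 * H0 - 2 + 1 - ρ)) :=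
                        mul_le_mul_right
                          (beta_bound ρ (2 * H0 - 2) hρ0 hρ1 hα0 hα1 s r hsr) _
                    _ = ENNReal.ofReal ((2 ^ ρ / (2 * H0 - 2 + 1) +
                          2 ^ (-(2 * H0 - 2)) / (1 - ρ)) *
                          ((t - s) ^ (-ρ) * (r - s) ^ (2 * H0 - 1 - ρ))) := by
                        rw [show 2 * H0 - 2 + 1 - ρ = 2 * H0 - 1 - ρ by ring,
                          ← ENNReal.ofReal_mul
                            (Real.rpow_nonneg (by linarith [hs.2] : (0:ℝ) ≤ t - s) _)]
                        congr 1
                        ring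
                · rw [min_eq_right hrs, Set.Ico_self]
                  simp
            _ = ∫⁻ s in Ioo 0 (min t r), ENNReal.ofReal
                  ((2 ^ ρ / (2 * H0 - 2 + 1) + 2 ^ (-(2 * H0 - 2)) / (1 - ρ)) *
                    ((t - s) ^ (-ρ) * (r - s) ^ (2 * H0 - 1 - ρ))) := by
                rw [lintegral_indicator measurableSet_Ioo,
                  Measure.restrict_restrict measurableSet_Ioo,
                  Set.inter_eq_self_of_subset_left (Set.Ioo_subset_Ioo_right hmt)]
            _ ≤ ENNReal.ofReal ((2 ^ ρ / (2 * H0 - 2 + 1) + 2 ^ (-(2 * H0 - 2)) / (1 - ρ)) *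
                  ((1 / (2 * H0 - 2 * ρ) + 1 / (1 - ρ)) * (t ^ (H0 - ρ) * r ^ (H0 - ρ)))) := by
                simp only [ENNReal.ofReal_mul hc0pos.le]
                rw [lintegral_const_mul' _ _ ENNReal.ofReal_ne_top]
                exact mul_le_mul_right (kcore H0 ρ t r hH1 hH2 hρ0 hρ ht hr) _
    _ ≤ ENNReal.ofReal (2 * (2 ^ ρ / (2 * H0 - 2 + 1) + 2 ^ (-(2 * H0 - 2)) / (1 - ρ)) *
          (1 / (2 * H0 - 2 * ρ) + 1 / (1 - ρ)) * t ^ (H0 - ρ) * r ^ (H0 - ρ)) := by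
        rw [← ENNReal.ofReal_add (by positivity) (by positivity)]
        exact ENNReal.ofReal_le_ofReal (le_of_eq (by ring))
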